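/- Let c ∈ (0, 1] and k₀ ≥ 2 an integer. Then the sum over integers k with 1 ≤ k ≤ ⌊k₀/2⌋ of k^{c−1}(k₀ − k)/(k₀^c − k^c)² is bounded by C·k₀^{1−c} for a constant C depending only on c. -/

import Mathlib

open Finset Real

lemma rpow_step (c : ℝ) (hc0 : 0 < c) (hc1 : c ≤ 1) {k : ℕ} (hk : 1 ≤ k) :
    c * (k : ℝ) ^ (c - 1) ≤ (k : ℝ) ^ c - ((k : ℝ) - 1) ^ c := by
  have hx : (1 : ℝ) ≤ (k : ℝ) := by exact_mod_cast hk
  have hx0 : (0 : ℝ) < (k : ℝ) := by linarith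
  have hinv : 1 / (k : ℝ) ≤ 1 := by rw [div_le_one hx0]; exact hx
  have hbern : (1 + (-(1 / (k : ℝ)))) ^ c ≤ 1 + c * (-(1 / (k : ℝ))) :=
    rpow_one_add_le_one_add_mul_self (by linarith) hc0.le hc1
  have h1 : ((k : ℝ) - 1) ^ c = (k : ℝ) ^ c * (1 + (-(1 / (k : ℝ)))) ^ c := by
    rw [show (k:ℝ) - 1 = (k:ℝ) * (1 + (-(1 / (k:ℝ)))) by field_simp; ring,
      Real.mul_rpow hx0.le (by linarith)]
  have h2 : ((k : ℝ) - 1) ^ c ≤ (k : ℝ) ^ c * (1 + c * (-(1 / (k : ℝ)))) := by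
    rw [h1]
    exact mul_le_mul_of_nonneg_left hbern (Real.rpow_nonneg hx0.le c)
  have h3 : (k : ℝ) ^ c * (1 + c * (-(1 / (k : ℝ)))) = (k : ℝ) ^ c - c * (k : ℝ) ^ (c - 1) := by
    rw [Real.rpow_sub hx0, Real.rpow_one]
    field_simp
    ring
  linarith [h3.le, h3.ge]

lemma telescope_sum (c : ℝ) (hc0 : 0 < c) (n : ℕ) :
    ∑ k ∈ Finset.Icc 1 n, ((k : ℝ) ^ c - ((k : ℝ) - 1) ^ c) = (n : ℝ) ^ c := by
  induction n with
  | zero => simp [Real.zero_rpow hc0.ne']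
  | succ n ih =>
      rw [Finset.sum_Icc_succ_top (by omega : 1 ≤ n + 1), ih]
      push_cast
      ring

lemma sum_rpow_le (c : ℝ) (hc0 : 0 < c) (hc1 : c ≤ 1) (n : ℕ) :
    ∑ k ∈ Finset.Icc 1 n, (k : ℝ) ^ (c - 1) ≤ (n : ℝ) ^ c / c := by
  rw [le_div_iff₀ hc0, mul_comm]
  calc c * ∑ k ∈ Finset.Icc 1 n, (k : ℝ) ^ (c - 1)
      = ∑ k ∈ Finset.Icc 1 n, c * (k : ℝ) ^ (c - 1) := by rw [Finset.mul_sum]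
    _ ≤ ∑ k ∈ Finset.Icc 1 n, ((k : ℝ) ^ c - ((k : ℝ) - 1) ^ c) :=
        Finset.sum_le_sum fun k hk => rpow_step c hc0 hc1 (Finset.mem_Icc.mp hk).1
    _ = (n : ℝ) ^ c := telescope_sum c hc0 n

open Finset in
theorem sum_S1_bound (c : ℝ) (hc0 : 0 < c) (hc1 : c ≤ 1) :
    ∃ C : ℝ, ∀ k₀ : ℕ, 2 ≤ k₀ →
      ∑ k ∈ Finset.Icc 1 (k₀ / 2),
          (k : ℝ) ^ (c - 1) * ((k₀ : ℝ) - (k : ℝ)) / ((k₀ : ℝ) ^ c - (k : ℝ) ^ c) ^ 2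
        ≤ C * (k₀ : ℝ) ^ (1 - c) := by
  set ε : ℝ := 1 - (2 : ℝ) ^ (-c) with hε_def
  have h2c : (1 : ℝ) < (2 : ℝ) ^ c := by
    rw [show (1:ℝ) = (2:ℝ) ^ (0:ℝ) by simp]
    exact Real.rpow_lt_rpow_of_exponent_lt one_lt_two hc0
  have hεpos : 0 < ε := by
    have h : (2 : ℝ) ^ (-c) < 1 := by
      rw [Real.rpow_neg (by norm_num : (0:ℝ) ≤ 2)]
      exact inv_lt_one_of_one_lt₀ h2c
    simp only [hε_def]; linarith
  refine ⟨1 / (c * ε ^ 2), ?_⟩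
  intro k₀ hk₀2
  have hk₀pos : (0 : ℝ) < (k₀ : ℝ) := by exact_mod_cast (by omega : 0 < k₀)
  have hkcpos : 0 < (k₀ : ℝ) ^ c := Real.rpow_pos_of_pos hk₀pos c
  set n := k₀ / 2 with hn_def
  -- denominator lower bound
  have hden : ∀ k ∈ Finset.Icc 1 n, (k₀ : ℝ) ^ c * ε ≤ (k₀ : ℝ) ^ c - (k : ℝ) ^ c := by
    intro k hk
    have hk2 : (k : ℝ) ≤ (k₀ : ℝ) / 2 := by
      calc (k : ℝ) ≤ ((n : ℕ) : ℝ) := by exact_mod_cast (Finset.mem_Icc.mp hk).2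
        _ ≤ (k₀ : ℝ) / 2 := by
            rw [hn_def]; push_cast [Nat.cast_div_le]; exact_mod_cast Nat.cast_div_le
    have hkc : (k : ℝ) ^ c ≤ ((k₀ : ℝ) / 2) ^ c :=
      Real.rpow_le_rpow (Nat.cast_nonneg k) hk2 hc0.le
    have heq : ((k₀ : ℝ) / 2) ^ c = (k₀ : ℝ) ^ c * (2 : ℝ) ^ (-c) := by
      rw [Real.div_rpow hk₀pos.le (by norm_num), Real.rpow_neg (by norm_num : (0:ℝ) ≤ 2),
        div_eq_mul_inv]
    rw [heq] at hkc
    simp only [hε_def]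
    nlinarith
  -- per-term bound and sum
  have hterm : ∀ k ∈ Finset.Icc 1 n,
      (k : ℝ) ^ (c - 1) * ((k₀ : ℝ) - (k : ℝ)) / ((k₀ : ℝ) ^ c - (k : ℝ) ^ c) ^ 2
        ≤ (k : ℝ) ^ (c - 1) * (k₀ : ℝ) / ((k₀ : ℝ) ^ c * ε) ^ 2 := by
    intro k hk
    have hkr0 : (0 : ℝ) ≤ (k : ℝ) ^ (c - 1) := Real.rpow_nonneg (Nat.cast_nonneg k) _
    apply div_le_div₀ (by positivity)
    · apply mul_le_mul_of_nonneg_left _ hkr0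
      have : (0:ℝ) ≤ (k : ℝ) := Nat.cast_nonneg k
      linarith
    · positivity
    · exact pow_le_pow_left₀ (by positivity) (hden k hk) 2
  calc ∑ k ∈ Finset.Icc 1 n,
        (k : ℝ) ^ (c - 1) * ((k₀ : ℝ) - (k : ℝ)) / ((k₀ : ℝ) ^ c - (k : ℝ) ^ c) ^ 2
      ≤ ∑ k ∈ Finset.Icc 1 n, (k : ℝ) ^ (c - 1) * (k₀ : ℝ) / ((k₀ : ℝ) ^ c * ε) ^ 2 :=
        Finset.sum_le_sum hterm
    _ = ((k₀ : ℝ) / ((k₀ : ℝ) ^ c * ε) ^ 2) * ∑ k ∈ Finset.Icc 1 n, (k : ℝ) ^ (c - 1) := by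
        rw [Finset.mul_sum]; exact Finset.sum_congr rfl fun k _ => by ring
    _ ≤ ((k₀ : ℝ) / ((k₀ : ℝ) ^ c * ε) ^ 2) * ((n : ℝ) ^ c / c) := by
        apply mul_le_mul_of_nonneg_left (sum_rpow_le c hc0 hc1 n) (by positivity)
    _ ≤ ((k₀ : ℝ) / ((k₀ : ℝ) ^ c * ε) ^ 2) * ((k₀ : ℝ) ^ c / c) := by
        apply mul_le_mul_of_nonneg_left _ (by positivity)
        gcongr
        exact Nat.div_le_self k₀ 2
    _ = 1 / (c * ε ^ 2) * (k₀ : ℝ) ^ (1 - c) := by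
        set X := (k₀ : ℝ) ^ c with hX
        set Y := (k₀ : ℝ) ^ (1 - c) with hY
        have h1 : Y * X = (k₀ : ℝ) := by
          rw [hX, hY, ← Real.rpow_add hk₀pos, sub_add_cancel, Real.rpow_one]
        have hXpos : 0 < X := hkcpos
        rw [← h1]
        field_simp
  done
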